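/- Fix ℏ ∈ ℂ with ℏ ≠ 0 and N ∈ ℂ. For every j ∈ ℤ the identity ((j−1)/ℏ)·(f_j(u) − f_{j−1}(u)) = u·( (1/ℏ)·f_j'(u) − ((j−1)(j−2)/4)·f_j(u) + ((j−2)/2)·u·f_j'(u) − (u²/4)·f_j''(u) − ((1−4N²)/16)·f_j(u) ) holds in ℂ[[u]]. Equivalently, the Kac–Schwarz operator c_N = (1/4)·d²/dλ² + (1/ℏ)·d/dλ + 1/ℏ² + (1−4N²)/(16λ²) acts on the basis vectors by c_N·Φ_j^{(N)} = ((j−1)/ℏ)·Φ_{j−1}^{(N)} + (1/ℏ²)·Φ_j^{(N)}. -/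

import Mathlib

noncomputable section

namespace BGWKS

/-- Formal derivative of a one-variable formal power series. -/
def d (g : PowerSeries ℂ) : PowerSeries ℂ := PowerSeries.derivative ℂ g

/-- `a_k(x) = Π_{i=1}^{k} (4(x−1)² − (2i−1)²)`, with `a_0(x) = 1`. -/
def aP (k : ℕ) (x : ℂ) : ℂ := ∏ i ∈ Finset.range k, (4*(x-1)^2 - ((2*i+1 : ℕ) : ℂ)^2)

/-- The series `f_j(u) = Σ_k ((−ℏ)^k·a_k(j−N)/(16^k·k!))·u^k` encoding the basis vector
`Φ_j^{(N)}(λ) = λ^{j−1}·f_j(1/λ)` of the generalized BGW point of the Sato Grassmannian. -/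
def f (ℏ N : ℂ) (j : ℤ) : PowerSeries ℂ :=
  PowerSeries.mk fun k => (-ℏ)^k * aP k ((j : ℂ) - N) / (16^k * (Nat.factorial k : ℂ))

end BGWKS

namespace BGWKS

lemma aP_succ (m : ℕ) (x : ℂ) :
    aP (m+1) x = aP m x * (4*(x-1)^2 - (2*(m:ℂ)+1)^2) := by
  rw [aP, Finset.prod_range_succ, ← aP]
  push_cast
  ring

lemma aP_ratio (m : ℕ) (x : ℂ) :
    aP m (x-1) * (2*x+2*m-3) = aP m x * (2*x-2*m-3) := by
  induction m with
  | zero => simp [aP]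
  | succ p ih =>
      have h1 := aP_succ p x
      have h2 := aP_succ p (x-1)
      push_cast [h1, h2]
      push_cast at ih
      linear_combination ((2*x-2*(p:ℂ)-5)*(2*x+2*(p:ℂ)-1)) * ih

lemma aP_diff (m : ℕ) (x : ℂ) :
    aP (m+1) x - aP (m+1) (x-1) = 4*((m:ℂ)+1)*(2*x-2*(m:ℂ)-3) * aP m x := by
  have h1 := aP_succ m x
  have h2 := aP_succ m (x-1)
  have h3 := aP_ratio m x
  linear_combination h1 - h2 - (2*x-2*(m:ℂ)-5) * h3

lemma coeff_zero_X_mul (g : PowerSeries ℂ) :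
    PowerSeries.coeff 0 (PowerSeries.X * g) = 0 := by
  simp [PowerSeries.coeff_zero_eq_constantCoeff]

lemma coeff_X_mul_d (g : PowerSeries ℂ) (m : ℕ) :
    PowerSeries.coeff m (PowerSeries.X * d g) =
      (m : ℂ) * PowerSeries.coeff m g := by
  cases m with
  | zero => simp [coeff_zero_X_mul]
  | succ p =>
      rw [PowerSeries.coeff_succ_X_mul, d, PowerSeries.coeff_derivative]
      push_cast
      ring

lemma coeff_X2_dd (g : PowerSeries ℂ) (m : ℕ) :
    PowerSeries.coeff m (PowerSeries.X^2 * d (d g)) =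
      (m : ℂ) * ((m : ℂ) - 1) * PowerSeries.coeff m g := by
  have hX2 : (PowerSeries.X^2 * d (d g) : PowerSeries ℂ)
      = PowerSeries.X * (PowerSeries.X * d (d g)) := by ring
  match m with
  | 0 => simp [hX2, coeff_zero_X_mul]
  | 1 => rw [hX2, PowerSeries.coeff_succ_X_mul, coeff_zero_X_mul]; push_cast; ring
  | (p+2) =>
      rw [hX2, PowerSeries.coeff_succ_X_mul, PowerSeries.coeff_succ_X_mul,
        d, d, PowerSeries.coeff_derivative, PowerSeries.coeff_derivative]
      push_cast
      ring

lemma scalar_key (ℏ N u1 u2 u3 t u M x : ℂ) (hℏ : ℏ ≠ 0)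
    (hx : x = u - N)
    (h2 : 16*t*u2 = -ℏ*(4*(x-1)^2-(2*M+1)^2)*u1)
    (h3 : u3 = u2 + ℏ*(2*x-2*M-3)/4*u1) :
    (u - 1)/ℏ * (u2 - u3) =
      ℏ⁻¹ * (u2 * t) - (u - 1)*(u - 2)/4 * u1 + (u - 2)/2 * (M * u1)
        - 1/4 * (M*(M-1)*u1) - (1 - 4*N^2)/16 * u1 := by
  apply mul_left_cancel₀ hℏ
  linear_combination ((u-1)*(u2-u3) - u2*t) * (mul_inv_cancel₀ hℏ)
    + (-(u-1)) * h3 + (-1/16 : ℂ) * h2 + (-(u - x + N)*ℏ*u1/4) * hx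

end BGWKS

open BGWKS

/-- the Kac–Schwarz operator
`c_N = (1/4)·d²/dλ² + (1/ℏ)·d/dλ + 1/ℏ² + (1−4N²)/(16λ²)` acts on the basis vectors by
`c_N·Φ_j^{(N)} = ((j−1)/ℏ)·Φ_{j−1}^{(N)} + (1/ℏ²)·Φ_j^{(N)}`, i.e. the identity below
holds in `ℂ[[u]]`. -/
theorem kac_schwarz_c_action (ℏ N : ℂ) (hℏ : ℏ ≠ 0) :
    ∀ j : ℤ, (((j : ℂ) - 1)/ℏ) • (f ℏ N j - f ℏ N (j-1)) =
      PowerSeries.X *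
        (ℏ⁻¹ • d (f ℏ N j)
          - ((((j : ℂ) - 1)*((j : ℂ) - 2))/4) • f ℏ N j
          + (((j : ℂ) - 2)/2) • (PowerSeries.X * d (f ℏ N j))
          - (1/4 : ℂ) • (PowerSeries.X^2 * d (d (f ℏ N j)))
          - ((1 - 4*N^2)/16) • f ℏ N j) := by
  intro j
  ext n
  set x : ℂ := (j : ℂ) - N with hxdef
  have hcast : (((j - 1 : ℤ)) : ℂ) - N = x - 1 := by rw [hxdef]; push_cast; ring
  cases n with
  | zero =>
      rw [PowerSeries.coeff_smul, map_sub, coeff_zero_X_mul]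
      simp [f, aP]
  | succ m =>
      rw [PowerSeries.coeff_smul, map_sub, PowerSeries.coeff_succ_X_mul,
        map_sub, map_sub, map_add, map_sub, PowerSeries.coeff_smul,
        PowerSeries.coeff_smul, PowerSeries.coeff_smul, PowerSeries.coeff_smul,
        PowerSeries.coeff_smul, coeff_X_mul_d, coeff_X2_dd,
        d, PowerSeries.coeff_derivative]
      have hfac : ((Nat.factorial (m+1) : ℕ) : ℂ)
          = ((m:ℂ)+1) * (Nat.factorial m : ℂ) := by
        rw [Nat.factorial_succ]; push_cast; ring
      have h16 : (16 : ℂ) ≠ 0 := by norm_num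
      have hfz : ((Nat.factorial m : ℕ) : ℂ) ≠ 0 :=
        Nat.cast_ne_zero.2 (Nat.factorial_ne_zero m)
      have hm1 : ((m:ℂ) + 1) ≠ 0 := Nat.cast_add_one_ne_zero m
      have hSne : ((16:ℂ)^m) ≠ 0 := pow_ne_zero m h16
      have h2 : 16*((m:ℂ)+1) * (PowerSeries.coeff (m+1) (f ℏ N j))
          = -ℏ*(4*(x-1)^2-(2*(m:ℂ)+1)^2) * (PowerSeries.coeff m (f ℏ N j)) := by
        simp only [f, PowerSeries.coeff_mk, ← hxdef]
        rw [aP_succ, hfac, pow_succ, pow_succ]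
        field_simp
        ring
      have h3 : PowerSeries.coeff (m+1) (f ℏ N (j-1))
          = PowerSeries.coeff (m+1) (f ℏ N j)
            + ℏ*(2*x-2*(m:ℂ)-3)/4 * (PowerSeries.coeff m (f ℏ N j)) := by
        simp only [f, PowerSeries.coeff_mk, hcast, ← hxdef]
        have hD : aP (m+1) (x-1)
            = aP (m+1) x - 4*((m:ℂ)+1)*(2*x-2*(m:ℂ)-3) * aP m x := by
          linear_combination - aP_diff m x
        rw [hD, hfac, pow_succ, pow_succ]
        field_simp
        ring
      simp only [smul_eq_mul]
      linear_combination scalar_key ℏ N (PowerSeries.coeff m (f ℏ N j))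
        (PowerSeries.coeff (m+1) (f ℏ N j)) (PowerSeries.coeff (m+1) (f ℏ N (j-1)))
        ((m:ℂ)+1) (j:ℂ) (m:ℂ) x hℏ hxdef h2 h3
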